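/- Let α be a 2-cocycle on a group G with values in kˣ and set ε(g,h) := α(g,h)·α(g*h*g⁻¹, g)⁻¹. Then for all g, h ∈ G, writing [g,h] = g*h*g⁻¹*h⁻¹ for the commutator: α([g,h], h*g*h⁻¹)·ε(h,g) = α([g,h], h)·ε(g⁻¹, g*h*g⁻¹). -/
import Mathlib


/-- For a 2-cocycle `α : G → G → kˣ` and `ε(g,h) := α(g,h) · α(g*h*g⁻¹,g)⁻¹`,
writing `[g,h] = g*h*g⁻¹*h⁻¹` for the commutator:
`α([g,h], h*g*h⁻¹) · ε(h,g) = α([g,h], h) · ε(g⁻¹, g*h*g⁻¹)`. -/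
theorem epsilon_trace_relation {G : Type*} [Group G] {k : Type*} [Field k]
    (α : G → G → kˣ)
    (hcoc : ∀ g h l : G, α g h * α (g * h) l = α h l * α g (h * l))
    (ε : G → G → kˣ) (hε : ∀ g h : G, ε g h = α g h * (α (g * h * g⁻¹) g)⁻¹) :
    ∀ g h : G,
      α (g * h * g⁻¹ * h⁻¹) (h * g * h⁻¹) * ε h g
        = α (g * h * g⁻¹ * h⁻¹) h * ε g⁻¹ (g * h * g⁻¹) := by
  intro g h
  rw [hε, hε]
  rw [show g⁻¹ * (g * h * g⁻¹) * g⁻¹⁻¹ = h by group]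
  -- cocycle instances (in kˣ)
  have h1 : α (g * h * g⁻¹ * h⁻¹) (h * g * h⁻¹) * α g h
      = α (h * g * h⁻¹) h * α (g * h * g⁻¹ * h⁻¹) (h * g) := by
    have := hcoc (g * h * g⁻¹ * h⁻¹) (h * g * h⁻¹) h
    rw [show (g * h * g⁻¹ * h⁻¹) * (h * g * h⁻¹) = g by group,
        show (h * g * h⁻¹) * h = h * g by group] at this
    exact this
  have h2 : α (g * h * g⁻¹ * h⁻¹) h * α (g * h * g⁻¹) g
      = α h g * α (g * h * g⁻¹ * h⁻¹) (h * g) := by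
    have := hcoc (g * h * g⁻¹ * h⁻¹) h g
    rw [show (g * h * g⁻¹ * h⁻¹) * h = g * h * g⁻¹ by group] at this
    exact this
  have h3 : α g⁻¹ (g * h * g⁻¹) * α (h * g⁻¹) g
      = α (g * h * g⁻¹) g * α g⁻¹ (g * h) := by
    have := hcoc g⁻¹ (g * h * g⁻¹) g
    rw [show g⁻¹ * (g * h * g⁻¹) = h * g⁻¹ by group,
        show (g * h * g⁻¹) * g = g * h by group] at this
    exact this
  have h4 : α h g⁻¹ * α (h * g⁻¹) g = α g⁻¹ g * α h 1 := by
    have := hcoc h g⁻¹ g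
    rw [inv_mul_cancel] at this
    exact this
  have h5 : α g⁻¹ g * α 1 h = α g h * α g⁻¹ (g * h) := by
    have := hcoc g⁻¹ g h
    rw [inv_mul_cancel] at this
    exact this
  have h6 : α h 1 = α 1 1 := by
    have := hcoc h 1 1
    rw [mul_one, one_mul] at this
    exact mul_right_cancel this
  have h7 : α 1 h = α 1 1 := by
    have := hcoc 1 1 h
    rw [one_mul, one_mul] at this
    exact (mul_right_cancel this).symm
  -- move to k
  apply Units.ext
  simp only [Units.val_mul, Units.val_inv_eq_inv_val]
  have H1 := congrArg Units.val h1
  have H2 := congrArg Units.val h2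
  have H3 := congrArg Units.val h3
  have H4 := congrArg Units.val h4
  have H5 := congrArg Units.val h5
  have H6 := congrArg Units.val h6
  have H7 := congrArg Units.val h7
  simp only [Units.val_mul] at H1 H2 H3 H4 H5 H6 H7
  -- abbreviations
  set A := ((α (g * h * g⁻¹ * h⁻¹) (h * g * h⁻¹) : kˣ) : k)
  set B := ((α g h : kˣ) : k)
  set C := ((α (h * g * h⁻¹) h : kˣ) : k)
  set D := ((α (g * h * g⁻¹ * h⁻¹) (h * g) : kˣ) : k)
  set E := ((α (g * h * g⁻¹ * h⁻¹) h : kˣ) : k)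
  set F := ((α (g * h * g⁻¹) g : kˣ) : k)
  set H := ((α h g : kˣ) : k)
  set I := ((α g⁻¹ (g * h * g⁻¹) : kˣ) : k)
  set J := ((α (h * g⁻¹) g : kˣ) : k)
  set K := ((α h g⁻¹ : kˣ) : k)
  set L := ((α g⁻¹ (g * h) : kˣ) : k)
  set M := ((α g⁻¹ g : kˣ) : k)
  set N := ((α h 1 : kˣ) : k)
  set P := ((α 1 h : kˣ) : k)
  set Q := ((α 1 1 : kˣ) : k)
  have hJ : J ≠ 0 := Units.ne_zero _
  have hB : B ≠ 0 := Units.ne_zero _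
  have hC : C ≠ 0 := Units.ne_zero _
  have hK : K ≠ 0 := Units.ne_zero _
  -- key: K*J = B*L
  have keyKJ : K * J = B * L := by
    linear_combination H4 + M * H6 - M * H7 + H5
  -- key: F*K = B*I
  have keyFK : F * K = B * I := by
    have : F * K * J = B * I * J := by
      linear_combination F * keyKJ - B * H3
    exact mul_right_cancel₀ hJ this
  -- main: A*H*K = E*I*C
  have main : A * H * K = E * I * C := by
    have : A * H * K * B = E * I * C * B := by
      linear_combination H * K * H1 - C * K * H2 + C * E * keyFK
    exact mul_right_cancel₀ hB this
  -- finish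
  field_simp
  linear_combination main
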